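/- Let K₀ be a number field and K a quadratic field extension of K₀, with rings of integers O_{K₀} ⊆ O_K. Let O be an order in K containing O_{K₀}, and let 𝔣 = {x ∈ K : x·O_K ⊆ O} be its conductor. Then O = O_{K₀} + (𝔣 ∩ O_{K₀})·O_K. -/

import Mathlib

open NumberField

/-- An order in a number field `K`: a subring (equivalently, a `ℤ`-subalgebra) of `K` that is
finitely generated as a `ℤ`-module and contains a `ℚ`-basis of `K` (i.e. spans `K` over `ℚ`). -/
def IsOrder (K : Type*) [Field K] [NumberField K] (O : Subalgebra ℤ K) : Prop :=
  (Subalgebra.toSubmodule O).FG ∧ Submodule.span ℚ (O : Set K) = ⊤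

/-- The ring of integers of `K₀` viewed as a subset of `K`. -/
noncomputable def realIntegers (K₀ K : Type*) [Field K₀] [NumberField K₀] [Field K]
    [NumberField K] [Algebra K₀ K] : Set K :=
  Set.range (fun a : 𝓞 K₀ => algebraMap K₀ K (algebraMap (𝓞 K₀) K₀ a))

/-- The conductor of a subset `O` of `K`: the set `{x ∈ K : x · 𝓞 K ⊆ O}`. -/
def conductorSet (K : Type*) [Field K] [NumberField K] (O : Set K) : Set K :=
  {x : K | ∀ y : 𝓞 K, x * algebraMap (𝓞 K) K y ∈ O}

/-- Let `K / K₀` be a quadratic extension of number fields, `O` an order of `K` containing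
the ring of integers of `K₀`, and `𝔣` its conductor.  Then `O = 𝓞 K₀ + (𝔣 ∩ 𝓞 K₀) · 𝓞 K`,
where `(𝔣 ∩ 𝓞 K₀) · 𝓞 K` is the `𝓞 K`-submodule of `K` generated by `𝔣 ∩ 𝓞 K₀`. -/
theorem maxRM_order_eq_realIntegers_add_conductor (K₀ K : Type*) [Field K₀] [NumberField K₀]
    [Field K] [NumberField K] [Algebra K₀ K] (h2 : Module.finrank K₀ K = 2)
    (O : Subalgebra ℤ K) (hO : IsOrder K O)
    (hRM : realIntegers K₀ K ⊆ (O : Set K)) :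
    (O : Set K) = {z : K | ∃ a ∈ realIntegers K₀ K,
      ∃ b ∈ (Submodule.span (𝓞 K)
          (conductorSet K (O : Set K) ∩ realIntegers K₀ K) : Submodule (𝓞 K) K),
        z = a + b} := by
  classical
  obtain ⟨hOfg, hOspan⟩ := hO
  have hOint : ∀ x ∈ O, IsIntegral ℤ x := fun x hx => IsIntegral.of_mem_of_fg O hOfg x hx
  set TK : Set K := Set.range (algebraMap (𝓞 K) K) with hTKdef
  have hTKmem : ∀ x : K, IsIntegral ℤ x → x ∈ TK := fun x hx => ⟨⟨x, hx⟩, rfl⟩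
  have hTKint : ∀ x ∈ TK, IsIntegral ℤ x := by rintro x ⟨u, rfl⟩; exact u.isIntegral_coe
  have hFint : ∀ a : K₀, IsIntegral ℤ a → IsIntegral ℤ (algebraMap K₀ K a) :=
    fun a ha => ha.map (algebraMap K₀ K).toIntAlgHom
  have hFintrev : ∀ a : K₀, IsIntegral ℤ (algebraMap K₀ K a) → IsIntegral ℤ a :=
    fun a ha => (isIntegral_algebraMap_iff (algebraMap K₀ K).injective).mp ha
  have hrealmem : ∀ a : K₀, IsIntegral ℤ a → algebraMap K₀ K a ∈ realIntegers K₀ K :=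
    fun a ha => ⟨⟨a, ha⟩, rfl⟩
  -- find ω ∈ O not in the image of K₀
  have : FiniteDimensional K₀ K := FiniteDimensional.right ℚ K₀ K
  obtain ⟨ω, hωO, hωnr⟩ : ∃ ω ∈ (O : Set K), ω ∉ Set.range (algebraMap K₀ K) := by
    by_contra hcon
    push_neg at hcon
    have hle : Submodule.span ℚ (O : Set K) ≤
        LinearMap.range ((Algebra.linearMap K₀ K).restrictScalars ℚ) := by
      rw [Submodule.span_le]
      intro x hx
      obtain ⟨a, ha⟩ := hcon x hx
      exact ⟨a, ha⟩
    rw [hOspan, top_le_iff] at hle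
    have h1 : Module.finrank ℚ K ≤ Module.finrank ℚ K₀ := by
      calc Module.finrank ℚ K
          = Module.finrank ℚ (⊤ : Submodule ℚ K) := (finrank_top ℚ K).symm
        _ = Module.finrank ℚ
            (LinearMap.range ((Algebra.linearMap K₀ K).restrictScalars ℚ)) := by rw [hle]
        _ ≤ Module.finrank ℚ K₀ := LinearMap.finrank_range_le _
    have h2' : Module.finrank ℚ K₀ * 2 = Module.finrank ℚ K := by
      rw [← h2]; exact Module.finrank_mul_finrank ℚ K₀ K
    have h3 : 0 < Module.finrank ℚ K₀ := Module.finrank_pos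
    omega
  -- the basis {1, ω} of K over K₀
  have hω1 : LinearIndependent K₀ ![(1 : K), ω] := by
    rw [LinearIndependent.pair_iff' one_ne_zero]
    intro a ha
    exact hωnr ⟨a, by rw [← ha, Algebra.smul_def, mul_one]⟩
  have hcard : Fintype.card (Fin 2) = Module.finrank K₀ K := by
    rw [Fintype.card_fin, h2]
  set B := basisOfLinearIndependentOfCardEqFinrank hω1 hcard with hBdef
  have hBcoe : ⇑B = ![(1 : K), ω] := coe_basisOfLinearIndependentOfCardEqFinrank hω1 hcard
  have hB0 : B 0 = (1 : K) := by rw [hBcoe]; rfl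
  have hB1 : B 1 = ω := by rw [hBcoe]; rfl
  set π : K →ₗ[K₀] K₀ := B.coord 1 with hπdef
  have hπω : π ω = 1 := by
    rw [hπdef, ← hB1, Module.Basis.coord_apply, Module.Basis.repr_self_apply]
    simp
  have hπ1 : π (1 : K) = 0 := by
    rw [hπdef, ← hB0, Module.Basis.coord_apply, Module.Basis.repr_self_apply]
    simp
  have hπsmul : ∀ (a : K₀) (x : K), π (algebraMap K₀ K a * x) = a * π x := by
    intro a x
    rw [← Algebra.smul_def, map_smul, smul_eq_mul]
  have hrepr : ∀ x : K, x - algebraMap K₀ K (π x) * ω ∈ Set.range (algebraMap K₀ K) := by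
    intro x
    have hsum := B.sum_repr x
    rw [Fin.sum_univ_two, hB0, hB1] at hsum
    refine ⟨B.repr x 0, ?_⟩
    have hπx : π x = B.repr x 1 := by rw [hπdef, Module.Basis.coord_apply]
    rw [hπx]
    have h1 : algebraMap K₀ K (B.repr x 0) = B.repr x 0 • (1 : K) := by
      rw [Algebra.smul_def, mul_one]
    have h2'' : algebraMap K₀ K (B.repr x 1) * ω = B.repr x 1 • ω := by
      rw [Algebra.smul_def]
    rw [h1, h2'']
    exact eq_sub_of_add_eq hsum
  have hπ0 : ∀ x : K, π x = 0 → x ∈ Set.range (algebraMap K₀ K) := by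
    intro x h
    have := hrepr x
    rwa [h, map_zero, zero_mul, sub_zero] at this
  have hreal0 : ∀ x ∈ TK, π x = 0 → x ∈ realIntegers K₀ K := by
    intro x hx h0
    obtain ⟨a, ha⟩ := hπ0 x h0
    rw [← ha]
    exact hrealmem a (hFintrev a (ha ▸ hTKint x hx))
  -- the submodules I and J of K₀
  set Isub : Submodule (𝓞 K₀) K₀ := Submodule.span (𝓞 K₀) (π '' TK) with hIsubdef
  set Jsub : Submodule (𝓞 K₀) K₀ := Submodule.span (𝓞 K₀) (π '' (O : Set K)) with hJsubdef
  have hOsubTK : (O : Set K) ⊆ TK := fun x hx => hTKmem x (hOint x hx)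
  have hIimg : ∀ b ∈ Isub, ∃ y ∈ TK, π y = b := by
    intro b hb
    induction hb using Submodule.span_induction with
    | mem x hx => obtain ⟨y, hy, rfl⟩ := hx; exact ⟨y, hy, rfl⟩
    | zero => exact ⟨0, hTKmem 0 isIntegral_zero, map_zero π⟩
    | add x y hx hy ihx ihy =>
        obtain ⟨u, hu, hu2⟩ := ihx
        obtain ⟨v, hv, hv2⟩ := ihy
        exact ⟨u + v, hTKmem _ ((hTKint u hu).add (hTKint v hv)),
          by rw [map_add, hu2, hv2]⟩
    | smul r x hx ih =>
        obtain ⟨u, hu, hu2⟩ := ih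
        refine ⟨algebraMap K₀ K (algebraMap (𝓞 K₀) K₀ r) * u,
          hTKmem _ ((hFint _ r.isIntegral_coe).mul (hTKint u hu)), ?_⟩
        rw [hπsmul, hu2, Algebra.smul_def]
  have hJimg : ∀ b ∈ Jsub, ∃ z ∈ (O : Set K), π z = b := by
    intro b hb
    induction hb using Submodule.span_induction with
    | mem x hx => obtain ⟨y, hy, rfl⟩ := hx; exact ⟨y, hy, rfl⟩
    | zero => exact ⟨0, O.zero_mem, map_zero π⟩
    | add x y hx hy ihx ihy =>
        obtain ⟨u, hu, hu2⟩ := ihx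
        obtain ⟨v, hv, hv2⟩ := ihy
        exact ⟨u + v, O.add_mem hu hv, by rw [map_add, hu2, hv2]⟩
    | smul r x hx ih =>
        obtain ⟨u, hu, hu2⟩ := ih
        refine ⟨algebraMap K₀ K (algebraMap (𝓞 K₀) K₀ r) * u,
          O.mul_mem (hRM (hrealmem _ r.isIntegral_coe)) hu, ?_⟩
        rw [hπsmul, hu2, Algebra.smul_def]
  -- finite generation
  have hIfg : Isub.FG := by
    obtain ⟨t, ht⟩ := Module.Finite.fg_top (R := ℤ) (M := 𝓞 K)
    refine ⟨(t.image (algebraMap (𝓞 K) K)).image π, ?_⟩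
    rw [Finset.coe_image, Finset.coe_image]
    refine le_antisymm (Submodule.span_le.mpr ?_) ?_
    · rintro b ⟨y, ⟨u, hu, rfl⟩, rfl⟩
      exact Submodule.subset_span ⟨_, ⟨u, rfl⟩, rfl⟩
    · rw [hIsubdef, Submodule.span_le]
      rintro b ⟨y, ⟨u, rfl⟩, rfl⟩
      have hu : u ∈ Submodule.span ℤ (↑t : Set (𝓞 K)) := by
        rw [ht]; exact Submodule.mem_top
      induction hu using Submodule.span_induction with
      | mem v hv => exact Submodule.subset_span ⟨algebraMap (𝓞 K) K v, ⟨v, hv, rfl⟩, rfl⟩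
      | zero => rw [map_zero, map_zero]; exact Submodule.zero_mem _
      | add v w _ _ ihv ihw =>
          rw [map_add, map_add]; exact Submodule.add_mem _ ihv ihw
      | smul n v _ ih =>
          rw [map_zsmul, map_zsmul]; exact zsmul_mem ih n
  have hJfg : Jsub.FG := by
    obtain ⟨s, hs⟩ := hOfg
    refine ⟨s.image π, ?_⟩
    rw [Finset.coe_image]
    refine le_antisymm (Submodule.span_le.mpr ?_) ?_
    · rintro b ⟨y, hy, rfl⟩
      have hyO : y ∈ (O : Set K) := by
        have : y ∈ Submodule.span ℤ (↑s : Set K) := Submodule.subset_span hy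
        rw [hs] at this
        exact this
      exact Submodule.subset_span ⟨y, hyO, rfl⟩
    · rw [hJsubdef, Submodule.span_le]
      rintro b ⟨y, hy, rfl⟩
      have hy' : y ∈ Submodule.span ℤ (↑s : Set K) := by
        rw [hs]; exact hy
      clear hy
      induction hy' using Submodule.span_induction with
      | mem v hv => exact Submodule.subset_span ⟨v, hv, rfl⟩
      | zero => rw [map_zero]; exact Submodule.zero_mem _
      | add v w _ _ ihv ihw => rw [map_add]; exact Submodule.add_mem _ ihv ihw
      | smul n v _ ih => rw [map_zsmul]; exact zsmul_mem ih n
  -- fractional ideals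
  set Ifr : FractionalIdeal (nonZeroDivisors (𝓞 K₀)) K₀ :=
    ⟨Isub, FractionalIdeal.isFractional_of_fg hIfg⟩ with hIfrdef
  set Jfr : FractionalIdeal (nonZeroDivisors (𝓞 K₀)) K₀ :=
    ⟨Jsub, FractionalIdeal.isFractional_of_fg hJfg⟩ with hJfrdef
  have hIcoe : (Ifr : Submodule (𝓞 K₀) K₀) = Isub := rfl
  have hJcoe : (Jfr : Submodule (𝓞 K₀) K₀) = Jsub := rfl
  have hωTK : ω ∈ TK := hTKmem ω (hOint ω hωO)
  have h1I : (1 : K₀) ∈ Ifr := by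
    show (1 : K₀) ∈ Isub
    exact hπω ▸ Submodule.subset_span ⟨ω, hωTK, rfl⟩
  have h1J : (1 : K₀) ∈ Jfr := by
    show (1 : K₀) ∈ Jsub
    exact hπω ▸ Submodule.subset_span ⟨ω, hωO, rfl⟩
  have hIne : Ifr ≠ 0 := by
    intro h
    rw [h] at h1I
    exact one_ne_zero ((FractionalIdeal.mem_zero_iff _).mp h1I)
  have hJle : Jfr ≤ Ifr := by
    intro x hx
    have hx' : x ∈ Jsub := hx
    show x ∈ Isub
    exact Submodule.span_mono (Set.image_mono (f := π) hOsubTK) hx'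
  have hkey : Jfr / Ifr * Ifr = Jfr := by
    have hinv : Ifr⁻¹ * Ifr = 1 := by
      rw [mul_comm]; exact mul_inv_cancel₀ hIne
    rw [div_eq_mul_inv, mul_assoc, hinv, mul_one]
  -- characterization of O
  have hOmem : ∀ x, x ∈ TK → π x ∈ Jsub → x ∈ (O : Set K) := by
    intro x hx hπx
    obtain ⟨z, hz, hπz⟩ := hJimg _ hπx
    have hd : x - z ∈ TK := hTKmem _ ((hTKint x hx).sub (hOint z hz))
    have hπd : π (x - z) = 0 := by rw [map_sub, hπz, sub_self]
    have hdO : x - z ∈ (O : Set K) := hRM (hreal0 _ hd hπd)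
    have := O.add_mem hdO hz
    simpa using this
  -- elements of J/I give conductor elements
  have hq : ∀ q ∈ Jfr / Ifr,
      algebraMap K₀ K q ∈ conductorSet K (O : Set K) ∩ realIntegers K₀ K := by
    intro q hq'
    have hmemdiv := (FractionalIdeal.mem_div_iff_of_ne_zero hIne).mp hq'
    have hq1 : ∃ r : 𝓞 K₀, algebraMap (𝓞 K₀) K₀ r = q := by
      have hmem : q ∈ Ifr / Ifr := (FractionalIdeal.mem_div_iff_of_ne_zero hIne).mpr
        (fun y hy => hJle (hmemdiv y hy))
      have hII : Ifr / Ifr = 1 := by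
        rw [div_eq_mul_inv]; exact mul_inv_cancel₀ hIne
      rw [hII] at hmem
      exact (FractionalIdeal.mem_one_iff _).mp hmem
    obtain ⟨r, hr⟩ := hq1
    have hqint : IsIntegral ℤ q := hr ▸ r.isIntegral_coe
    refine ⟨?_, hrealmem q hqint⟩
    intro y
    have hyTK : algebraMap (𝓞 K) K y ∈ TK := ⟨y, rfl⟩
    apply hOmem
    · exact hTKmem _ ((hFint q hqint).mul (hTKint _ hyTK))
    · rw [hπsmul]
      have hπy : π (algebraMap (𝓞 K) K y) ∈ Ifr := by
        show _ ∈ Isub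
        exact Submodule.subset_span ⟨_, hyTK, rfl⟩
      exact hmemdiv _ hπy
  -- the span is contained in O
  have hspanO : ∀ w ∈ Submodule.span (𝓞 K)
      (conductorSet K (O : Set K) ∩ realIntegers K₀ K), w ∈ (O : Set K) := by
    have haux : ∀ w ∈ Submodule.span (𝓞 K)
        (conductorSet K (O : Set K) ∩ realIntegers K₀ K),
        ∀ u : 𝓞 K, algebraMap (𝓞 K) K u * w ∈ (O : Set K) := by
      intro w hw
      induction hw using Submodule.span_induction with
      | mem x hx => intro u; rw [mul_comm]; exact hx.1 u
      | zero => intro u; rw [mul_zero]; exact O.zero_mem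
      | add x y _ _ ihx ihy => intro u; rw [mul_add]; exact O.add_mem (ihx u) (ihy u)
      | smul v x _ ih =>
          intro u
          rw [Algebra.smul_def, ← mul_assoc, ← map_mul]
          exact ih (u * v)
    intro w hw
    have := haux w hw 1
    rwa [map_one, one_mul] at this
  -- conclusion
  ext z
  simp only [Set.mem_setOf_eq, SetLike.mem_coe]
  constructor
  · intro hz
    have hb : π z ∈ (Jfr : Submodule (𝓞 K₀) K₀) := by
      rw [hJcoe]
      exact Submodule.subset_span ⟨z, hz, rfl⟩
    rw [← hkey, FractionalIdeal.coe_mul] at hb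
    have main : ∃ w ∈ Submodule.span (𝓞 K)
        (conductorSet K (O : Set K) ∩ realIntegers K₀ K), π w = π z := by
      refine Submodule.mul_induction_on hb ?_ ?_
      · intro q hq' r hr'
        have hq'' : q ∈ Jfr / Ifr := FractionalIdeal.mem_coe.mp hq'
        have hr'' : r ∈ Isub := by rw [hIcoe] at hr'; exact hr'
        obtain ⟨y, hy, hπy⟩ := hIimg r hr''
        obtain ⟨u, hu⟩ := hy
        refine ⟨algebraMap K₀ K q * y, ?_, ?_⟩
        · have hsp := Submodule.subset_span (R := 𝓞 K) (hq q hq'')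
          have heq : u • algebraMap K₀ K q = algebraMap K₀ K q * y := by
            rw [Algebra.smul_def, hu, mul_comm]
          exact heq ▸ Submodule.smul_mem _ u hsp
        · rw [hπsmul, hπy]
      · rintro x y ⟨w1, hw1, hp1⟩ ⟨w2, hw2, hp2⟩
        exact ⟨w1 + w2, Submodule.add_mem _ hw1 hw2, by rw [map_add, hp1, hp2]⟩
    obtain ⟨w, hw, hπw⟩ := main
    have hwO : w ∈ (O : Set K) := hspanO w hw
    have hdTK : z - w ∈ TK := hTKmem _ ((hOint z hz).sub (hOint w hwO))
    have hreal' : z - w ∈ realIntegers K₀ K :=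
      hreal0 _ hdTK (by rw [map_sub, hπw, sub_self])
    exact ⟨z - w, hreal', w, hw, by ring⟩
  · rintro ⟨a, ha, b, hb, rfl⟩
    exact O.add_mem (hRM ha) (hspanO b hb)
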